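/- Let Λ be an Artin algebra, E a generator of Λ-mod, and Γ = (End_Λ E)^op. Then Hom_Λ(E, -) induces an equivalence between G(E) (the category of Λ-modules admitting complete add E-resolutions) and the category GP(Γ) of Gorenstein-projective Γ-modules. -/

import Mathlib

set_option linter.unusedVariables false

/-!
STATEMENT 5.
Let Λ be an Artin algebra, E a generator of Λ-mod, Γ = (End_Λ E)^op.
Then Hom_Λ(E, -) induces an equivalence between G(E) (the Λ-modules admitting
complete add E-resolutions) and the category GP(Γ) of finitely generated
Gorenstein-projective Γ-modules.
-/

open CategoryTheory CategoryTheory.Limits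

section GorensteinGeneral

variable {A : Type*} [Category A] [Abelian A]

/-- `Hom(C', X•)` is exact for every `C'` satisfying `P`. -/
def CExact (P : A → Prop) (X : CochainComplex A ℤ) : Prop :=
  ∀ C : A, P C → ∀ (n : ℤ) (g : C ⟶ X.X n), g ≫ X.d n (n + 1) = 0 →
    ∃ f : C ⟶ X.X (n - 1), f ≫ X.d (n - 1) n = g

/-- `Hom(X•, C')` is exact for every `C'` satisfying `P`. -/
def CCoexact (P : A → Prop) (X : CochainComplex A ℤ) : Prop :=
  ∀ C : A, P C → ∀ (n : ℤ) (g : X.X n ⟶ C), X.d (n - 1) n ≫ g = 0 →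
    ∃ f : X.X (n + 1) ⟶ C, X.d n (n + 1) ≫ f = g

/-- `X•` is a complete `C`-resolution of `L`. -/
structure IsCompleteResolution (P : A → Prop) (X : CochainComplex A ℤ) (L : A) : Prop where
  exact : ∀ n, X.ExactAt n
  mem : ∀ n, P (X.X n)
  cexact : CExact P X
  ccoexact : CCoexact P X
  im : Nonempty (L ≅ Limits.image (X.d 0 1))

/-- `G(C)`: objects admitting a complete `C`-resolution. -/
def GClass (P : A → Prop) : A → Prop :=
  fun L => ∃ X : CochainComplex A ℤ, IsCompleteResolution P X L

end GorensteinGeneral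

/-- A finitely generated Gorenstein-projective module over a ring `S`. -/
def GPfg (S : Type*) [Ring S] (M : ModuleCat S) : Prop :=
  Module.Finite S M ∧ GClass (fun C : ModuleCat S => Projective C ∧ Module.Finite S C) M

variable (Λ : Type*) [Ring Λ] (E : ModuleCat Λ)

/-- `M ∈ add E`. -/
def InAdd (M : ModuleCat Λ) : Prop :=
  ∃ (n : ℕ) (s : M ⟶ ModuleCat.of Λ (Fin n → E)) (r : ModuleCat.of Λ (Fin n → E) ⟶ M),
    s ≫ r = 𝟙 M

/-- `Hom_Λ(E, X)` as a left `(End_Λ E)ᵐᵒᵖ`-module via precomposition. -/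
instance endOpModule (X : ModuleCat Λ) :
    Module (Module.End Λ E)ᵐᵒᵖ (E →ₗ[Λ] X) where
  smul φ f := f ∘ₗ φ.unop
  one_smul f := LinearMap.ext fun _ => rfl
  mul_smul a b f := LinearMap.ext fun _ => rfl
  smul_zero a := LinearMap.ext fun _ => rfl
  smul_add a f g := LinearMap.ext fun _ => rfl
  add_smul a b f := LinearMap.ext fun x => f.map_add _ _
  zero_smul f := LinearMap.ext fun x => f.map_zero

/-- The functor `Hom_Λ(E, -) : Λ-Mod ⥤ Γ-Mod`, `Γ = (End_Λ E)ᵐᵒᵖ`. -/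
def homEFunctor : ModuleCat Λ ⥤ ModuleCat (Module.End Λ E)ᵐᵒᵖ where
  obj X := ModuleCat.of _ (E →ₗ[Λ] X)
  map {X Y} g :=
    ModuleCat.ofHom
    { toFun := fun f => g.hom ∘ₗ f
      map_add' := fun f₁ f₂ => LinearMap.ext fun x => g.hom.map_add _ _
      map_smul' := fun a f => LinearMap.ext fun _ => rfl }
  map_id X := rfl
  map_comp g h := rfl


/-! ### Auxiliary lemmas -/

section Aux

universe u uP vP

theorem myProjectiveCat {S : Type*} [Ring S] {C : ModuleCat S} (h : Module.Projective S C) :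
    Projective C := by
  constructor
  intro X Y f e he
  obtain ⟨l, hl⟩ := Module.projective_lifting_property e.hom f.hom
    ((ModuleCat.epi_iff_surjective _).mp he)
  exact ⟨ModuleCat.ofHom l, ModuleCat.hom_ext (LinearMap.ext fun x => DFunLike.congr_fun hl x)⟩

theorem myModuleProj {S : Type uP} [Ring S] {C : ModuleCat.{uP} S} (h : Projective C) :
    Module.Projective S C := by
  have surj : Function.Surjective (Finsupp.linearCombination S (id : C → C)) :=
    fun m => ⟨Finsupp.single m 1, by simp⟩
  let p : ModuleCat.of S (C →₀ S) ⟶ C := ModuleCat.ofHom (Finsupp.linearCombination S (id : C → C))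
  haveI : Epi p := (ModuleCat.epi_iff_surjective p).mpr surj
  refine ⟨⟨(Projective.factorThru (𝟙 C) p).hom, fun m => ?_⟩⟩
  exact ConcreteCategory.congr_hom (Projective.factorThru_comp (𝟙 C) p) m

theorem myExactAtIff {S : Type*} [Ring S] (K : CochainComplex (ModuleCat S) ℤ) (n : ℤ) :
    K.ExactAt n ↔ ∀ x : K.X n, K.d n (n+1) x = 0 → ∃ y : K.X (n-1), K.d (n-1) n y = x := by
  rw [K.exactAt_iff' (n-1) (n) (n+1) (by simp) (by simp)]
  exact (K.sc' (n-1) n (n+1)).moduleCat_exact_iff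

variable {Λ : Type u} [Ring Λ] {E : ModuleCat.{u} Λ}

theorem inAdd_self : InAdd Λ E E := by
  refine ⟨1, ModuleCat.ofHom (LinearMap.pi (fun _ => LinearMap.id)), ModuleCat.ofHom (LinearMap.proj 0), ?_⟩
  apply ModuleCat.hom_ext; apply LinearMap.ext; intro x; rfl

theorem inAdd_pow (k : ℕ) : InAdd Λ E (ModuleCat.of Λ (Fin k → E)) :=
  ⟨k, 𝟙 _, 𝟙 _, Category.id_comp _⟩

theorem homE_map_zero {M N : ModuleCat.{u} Λ} :
    (homEFunctor Λ E).map (0 : M ⟶ N) = 0 := by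
  apply ModuleCat.hom_ext; apply LinearMap.ext; intro f; apply LinearMap.ext; intro x; rfl

/-- Reinterpret an element of `Hom(E,M)` as a linear map. -/
def asHomE {M : ModuleCat.{u} Λ} (f : ((homEFunctor Λ E).obj M : Type u)) : E ⟶ M := ModuleCat.ofHom f

/-- Reinterpret a linear map as an element of `Hom(E,M)`. -/
def toHomE {M : ModuleCat.{u} Λ} (f : E ⟶ M) : ((homEFunctor Λ E).obj M : Type u) := f.hom

@[simp] theorem asHomE_add {M : ModuleCat.{u} Λ} (f g : ((homEFunctor Λ E).obj M : Type u)) :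
    asHomE (f + g) = asHomE f + asHomE g := rfl

@[simp] theorem asHomE_smul {M : ModuleCat.{u} Λ} (α : Module.End Λ E)
    (g : ((homEFunctor Λ E).obj M : Type u)) :
    asHomE ((MulOpposite.op α) • g) = ModuleCat.ofHom ((asHomE g).hom ∘ₗ α) := rfl

@[simp] theorem asHomE_toHomE {M : ModuleCat.{u} Λ} (f : E ⟶ M) : asHomE (toHomE f) = f := rfl

/-- auxiliary family of maps `E ⟶ M` associated to `m : M`. -/
def ffAux {k : ℕ} (r : ModuleCat.of Λ (Fin k → E) ⟶ ModuleCat.of Λ Λ)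
    (M : ModuleCat.{u} Λ) (m : M) (i : Fin k) : E ⟶ M :=
  ModuleCat.ofHom ((LinearMap.toSpanSingleton Λ M m) ∘ₗ r.hom ∘ₗ
    (LinearMap.single Λ (fun _ : Fin k => E) i))

theorem ffAux_key {k : ℕ} {s : ModuleCat.of Λ Λ ⟶ ModuleCat.of Λ (Fin k → E)}
    {r : ModuleCat.of Λ (Fin k → E) ⟶ ModuleCat.of Λ Λ} (hsr : s ≫ r = 𝟙 _)
    (M : ModuleCat.{u} Λ) (m : M) :
    (∑ i, (ffAux r M m i) ((s ((1 : Λ))) i)) = m := by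
  have hrs : r (s ((1 : Λ))) = ((1 : Λ)) := ConcreteCategory.congr_hom hsr _
  calc (∑ i, (ffAux r M m i) ((s ((1 : Λ))) i))
      = LinearMap.toSpanSingleton Λ M m (r (∑ i,
          (LinearMap.single Λ (fun _ : Fin k => (E : Type _)) i) ((s ((1 : Λ))) i))) := by
        rw [map_sum, map_sum]; rfl
    _ = m := by
        have h1 : (∑ i, (LinearMap.single Λ (fun _ : Fin k => (E : Type _)) i)
            ((s ((1 : Λ))) i)) = s ((1 : Λ)) := by
          simp only [LinearMap.single_apply]
          exact Finset.univ_sum_single _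
        rw [h1, hrs]
        simp

/-- Key lemma: bijectivity of `Hom(E,-)` on morphisms, given that `Λ ∈ add E`. -/
theorem homE_bijective (hgen : InAdd Λ E (ModuleCat.of Λ Λ)) (M N : ModuleCat.{u} Λ) :
    Function.Bijective (fun h : M ⟶ N => (homEFunctor Λ E).map h) := by
  obtain ⟨k, s, r, hsr⟩ := hgen
  constructor
  · intro h h' hh
    have hh' : (homEFunctor Λ E).map h = (homEFunctor Λ E).map h' := hh
    apply ModuleCat.hom_ext; apply LinearMap.ext; intro m
    have e1 : h m = ∑ i, asHomE ((homEFunctor Λ E).map h (toHomE (ffAux r M m i))) ((s (1 : Λ)) i) := by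
      conv_lhs => rw [← ffAux_key hsr M m]
      rw [map_sum]; rfl
    have e2 : h' m = ∑ i, asHomE ((homEFunctor Λ E).map h' (toHomE (ffAux r M m i))) ((s (1 : Λ)) i) := by
      conv_lhs => rw [← ffAux_key hsr M m]
      rw [map_sum]; rfl
    change h m = h' m
    rw [e1, e2, hh']
  · intro φ
    set x0 : Fin k → E := s (1 : Λ) with hx0
    let hfun : M → N := fun m => ∑ i, asHomE (φ (toHomE (ffAux r M m i))) (x0 i)
    have ffadd : ∀ (m m' : M) (i : Fin k), ffAux r M (m + m') i =
        ffAux r M m i + ffAux r M m' i := by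
      intro m m' i
      apply ModuleCat.hom_ext; apply LinearMap.ext; intro e
      simp only [ffAux, ModuleCat.hom_ofHom, ModuleCat.hom_add, LinearMap.add_apply, LinearMap.comp_apply, LinearMap.toSpanSingleton_apply]
      apply smul_add
    have hadd : ∀ m m', hfun (m + m') = hfun m + hfun m' := by
      intro m m'
      show (∑ i, asHomE (φ (toHomE (ffAux r M (m + m') i))) (x0 i)) = _
      have : ∀ i : Fin k, asHomE (φ (toHomE (ffAux r M (m + m') i))) (x0 i) =
          asHomE (φ (toHomE (ffAux r M m i))) (x0 i) + asHomE (φ (toHomE (ffAux r M m' i))) (x0 i) := by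
        intro i
        rw [ffadd]
        have : φ (toHomE (ffAux r M m i + ffAux r M m' i)) = φ (toHomE (ffAux r M m i)) + φ (toHomE (ffAux r M m' i)) :=
          map_add φ.hom (toHomE (ffAux r M m i)) (toHomE (ffAux r M m' i))
        rw [this]; rfl
      rw [Finset.sum_congr rfl (fun i _ => this i), Finset.sum_add_distrib]
    let hAdd : M →+ N := AddMonoidHom.mk' hfun hadd
    have hkey : ∀ (f : E ⟶ M) (e : E), hfun (f e) = asHomE (φ (toHomE f)) e := by
      intro f e
      have hffe : ∀ i : Fin k, toHomE (ffAux r M (f e) i) =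
          (MulOpposite.op (ffAux r E e i).hom) • (toHomE f) := by
        intro i
        apply LinearMap.ext; intro v
        show (r _) • (f e) = f ((ffAux r E e i).hom v)
        show (r _) • (f e) = f ((r _) • e)
        rw [map_smul]
      calc hfun (f e) = ∑ i, asHomE (φ (toHomE (ffAux r M (f e) i))) (x0 i) := rfl
        _ = ∑ i, asHomE (φ (toHomE f)) ((ffAux r E e i) (x0 i)) := by
            refine Finset.sum_congr rfl (fun i _ => ?_)
            rw [hffe i, map_smul, asHomE_smul]
            rfl
        _ = asHomE (φ (toHomE f)) (∑ i, (ffAux r E e i) (x0 i)) := by rw [map_sum]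
        _ = asHomE (φ (toHomE f)) e := by rw [ffAux_key hsr E e]
    have hsmul : ∀ (c : Λ) (m : M), hfun (c • m) = c • hfun m := by
      intro c m
      have hcm : c • m = ∑ i, (ffAux r M m i) (c • x0 i) := by
        conv_lhs => rw [← ffAux_key hsr M m]
        rw [Finset.smul_sum]
        exact Finset.sum_congr rfl (fun i _ => (map_smul _ _ _).symm)
      calc hfun (c • m) = hAdd (∑ i, (ffAux r M m i) (c • x0 i)) := by rw [← hcm]; rfl
        _ = ∑ i, hfun ((ffAux r M m i) (c • x0 i)) := by rw [map_sum]; rfl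
        _ = ∑ i, asHomE (φ (toHomE (ffAux r M m i))) (c • x0 i) :=
            Finset.sum_congr rfl (fun i _ => hkey _ _)
        _ = c • ∑ i, asHomE (φ (toHomE (ffAux r M m i))) (x0 i) := by
            rw [Finset.smul_sum]
            exact Finset.sum_congr rfl (fun i _ => map_smul _ _ _)
        _ = c • hfun m := rfl
    refine ⟨ModuleCat.ofHom ⟨⟨hfun, fun a b => hadd a b⟩, fun c a => hsmul c a⟩, ?_⟩
    apply ModuleCat.hom_ext; apply LinearMap.ext; intro f; apply LinearMap.ext; intro e
    exact hkey (ModuleCat.ofHom f) e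

theorem homE_full (hgen : InAdd Λ E (ModuleCat.of Λ Λ)) {M N : ModuleCat.{u} Λ}
    (φ : (homEFunctor Λ E).obj M ⟶ (homEFunctor Λ E).obj N) :
    ∃ h : M ⟶ N, (homEFunctor Λ E).map h = φ :=
  (homE_bijective hgen M N).2 φ

theorem homE_faithful (hgen : InAdd Λ E (ModuleCat.of Λ Λ)) {M N : ModuleCat.{u} Λ}
    {h h' : M ⟶ N} (H : (homEFunctor Λ E).map h = (homEFunctor Λ E).map h') : h = h' :=
  (homE_bijective hgen M N).1 H

end Aux

section Aux2

universe u

variable {Λ : Type u} [Ring Λ] {E : ModuleCat.{u} Λ}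

/-- `Hom_Λ(E, E^k) ≅ Γ^k` as `Γ`-modules. -/
def iotaEquiv (k : ℕ) :
    (Fin k → (Module.End Λ E)ᵐᵒᵖ) ≃ₗ[(Module.End Λ E)ᵐᵒᵖ]
      ((homEFunctor Λ E).obj (ModuleCat.of Λ (Fin k → E)) : Type u) where
  toFun v := (show E →ₗ[Λ] (Fin k → E) from
    { toFun := fun e i => (v i).unop e
      map_add' := fun a b => funext fun i => ((v i).unop).map_add a b
      map_smul' := fun c a => funext fun i => ((v i).unop).map_smul c a })
  map_add' v w := LinearMap.ext fun e => funext fun i => rfl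
  map_smul' c v := LinearMap.ext fun e => funext fun i => rfl
  invFun g := fun i => MulOpposite.op ((LinearMap.proj (φ := fun _ : Fin k => (E : Type u)) i) ∘ₗ (asHomE g).hom)
  left_inv v := funext fun i => MulOpposite.unop_injective (LinearMap.ext fun e => rfl)
  right_inv g := LinearMap.ext fun e => funext fun i => rfl

/-- For `M ∈ add E`, the `Γ`-module `Hom_Λ(E,M)` is f.g. projective. -/
theorem homE_obj_finite_projective {M : ModuleCat.{u} Λ} (hM : InAdd Λ E M) :
    Module.Finite (Module.End Λ E)ᵐᵒᵖ ((homEFunctor Λ E).obj M : Type u) ∧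
    Module.Projective (Module.End Λ E)ᵐᵒᵖ ((homEFunctor Λ E).obj M : Type u) := by
  obtain ⟨k, s, r, hsr⟩ := hM
  have hcomp : ∀ y : ((homEFunctor Λ E).obj M : Type u),
      (homEFunctor Λ E).map r ((homEFunctor Λ E).map s y) = y := by
    intro y
    have h2 : (homEFunctor Λ E).map s ≫ (homEFunctor Λ E).map r = 𝟙 _ := by
      rw [← Functor.map_comp, hsr]
      exact CategoryTheory.Functor.map_id _ _
    exact ConcreteCategory.congr_hom h2 y
  haveI h1 : Module.Finite (Module.End Λ E)ᵐᵒᵖ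
      ((homEFunctor Λ E).obj (ModuleCat.of Λ (Fin k → E)) : Type u) :=
    Module.Finite.equiv (iotaEquiv k)
  haveI h2 : Module.Projective (Module.End Λ E)ᵐᵒᵖ
      ((homEFunctor Λ E).obj (ModuleCat.of Λ (Fin k → E)) : Type u) :=
    Module.Projective.of_equiv (iotaEquiv k)
  constructor
  · exact Module.Finite.of_surjective
      ((homEFunctor Λ E).map r).hom (fun y => ⟨_, hcomp y⟩)
  · exact Module.Projective.of_split ((homEFunctor Λ E).map s).hom ((homEFunctor Λ E).map r).hom
      (LinearMap.ext hcomp)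

/-- Every f.g. projective `Γ`-module is `Hom_Λ(E,M)` for some `M ∈ add E`. -/
theorem exists_inAdd_iso (hgen : InAdd Λ E (ModuleCat.of Λ Λ))
    (C : ModuleCat.{u} (Module.End Λ E)ᵐᵒᵖ) (hC : Projective C)
    (hCf : Module.Finite (Module.End Λ E)ᵐᵒᵖ C) :
    ∃ M : ModuleCat.{u} Λ, InAdd Λ E M ∧ Nonempty (C ≅ (homEFunctor Λ E).obj M) := by
  obtain ⟨k, p, hp⟩ := @Module.Finite.exists_fin' (Module.End Λ E)ᵐᵒᵖ C _ _ _ hCf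
  have hproj : Module.Projective (Module.End Λ E)ᵐᵒᵖ C := myModuleProj hC
  obtain ⟨σ, hσ⟩ := Module.projective_lifting_property p LinearMap.id hp
  letI := endOpModule Λ E (ModuleCat.of Λ (Fin k → E))
  let p'' : (homEFunctor Λ E).obj (ModuleCat.of Λ (Fin k → E)) ⟶ C :=
    ModuleCat.ofHom (p ∘ₗ (iotaEquiv k).symm.toLinearMap)
  let σ'' : C ⟶ (homEFunctor Λ E).obj (ModuleCat.of Λ (Fin k → E)) :=
    ModuleCat.ofHom ((iotaEquiv k).toLinearMap ∘ₗ σ)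
  have hps : ∀ c : C, p'' (σ'' c) = c := by
    intro c
    show p ((iotaEquiv k).symm ((iotaEquiv k) (σ c))) = c
    rw [LinearEquiv.symm_apply_apply]
    exact DFunLike.congr_fun hσ c
  have hsp : σ'' ≫ p'' = 𝟙 C := ModuleCat.hom_ext (LinearMap.ext hps)
  obtain ⟨e, he⟩ := homE_full hgen (p'' ≫ σ'')
  have hee : e ≫ e = e := by
    apply homE_faithful hgen
    rw [Functor.map_comp, he]
    rw [Category.assoc, ← Category.assoc σ'' p'' σ'', hsp, Category.id_comp]
  have heid : ∀ x, e (e x) = e x := fun x => ConcreteCategory.congr_hom hee x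
  have heid' : ∀ x ∈ LinearMap.range e.hom, e x = x := by
    rintro x ⟨y, rfl⟩
    exact heid y
  refine ⟨ModuleCat.of Λ (LinearMap.range e.hom), ?_, ?_⟩
  · exact ⟨k, ModuleCat.ofHom (LinearMap.range e.hom).subtype,
      ModuleCat.ofHom (LinearMap.rangeRestrict e.hom),
      ModuleCat.hom_ext (LinearMap.ext fun x => Subtype.ext (heid' x.1 x.2))⟩
  · -- the isomorphism `C ≅ Hom(E, range e)`
    have hfix : ∀ c : C, ∀ x : E, (asHomE (σ'' c)) x ∈
        LinearMap.range e.hom := by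
      intro c x
      have h3 : (homEFunctor Λ E).map e (σ'' c) = σ'' c := by
        rw [he]
        show σ'' (p'' (σ'' c)) = σ'' c
        rw [hps]
      exact ⟨(asHomE (σ'' c)) x, ConcreteCategory.congr_hom (congrArg asHomE h3) x⟩
    letI := endOpModule Λ E (ModuleCat.of Λ (LinearMap.range e.hom))
    let fwd : C ⟶ (homEFunctor Λ E).obj
        (ModuleCat.of Λ (LinearMap.range e.hom)) :=
      ModuleCat.ofHom
      { toFun := fun c => LinearMap.codRestrict _ (asHomE (σ'' c)).hom (hfix c)
        map_add' := fun c c' => LinearMap.ext fun x => Subtype.ext (by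
          show (asHomE (σ'' (c + c'))) x = (asHomE (σ'' c)) x + (asHomE (σ'' c')) x
          rw [map_add (ConcreteCategory.hom σ'')]
          rfl)
        map_smul' := fun γ c => LinearMap.ext fun x => Subtype.ext (by
          show (asHomE (σ'' (γ • c))) x = (asHomE (σ'' c)) (γ.unop x)
          rw [map_smul (ConcreteCategory.hom σ'')]
          rfl) }
    let bwd : (homEFunctor Λ E).obj
        (ModuleCat.of Λ (LinearMap.range e.hom)) ⟶ C :=
      ModuleCat.ofHom
      { toFun := fun u => p''
          ((LinearMap.range e.hom).subtype ∘ₗ (asHomE u).hom)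
        map_add' := fun u u' => by
          refine Eq.trans ?_ (map_add (ConcreteCategory.hom p'')
            ((LinearMap.range e.hom).subtype ∘ₗ (asHomE u).hom)
            ((LinearMap.range e.hom).subtype ∘ₗ (asHomE u').hom))
          rfl
        map_smul' := fun γ u => by
          refine Eq.trans ?_ (map_smul (ConcreteCategory.hom p'') γ
            ((LinearMap.range e.hom).subtype ∘ₗ (asHomE u).hom))
          rfl }
    refine ⟨⟨fwd, bwd, ?_, ?_⟩⟩
    · apply ModuleCat.hom_ext; apply LinearMap.ext
      intro c
      show p'' (_ ∘ₗ LinearMap.codRestrict _ (asHomE (σ'' c)).hom (hfix c)) = c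
      rw [LinearMap.subtype_comp_codRestrict]
      exact hps c
    · apply ModuleCat.hom_ext; apply LinearMap.ext
      intro u
      apply LinearMap.ext
      intro x
      apply Subtype.ext
      show (asHomE (σ'' (p'' ((LinearMap.range e.hom).subtype ∘ₗ (asHomE u).hom)))) x = ((asHomE u) x).1
      have h4 : σ'' (p'' ((LinearMap.range e.hom).subtype
          ∘ₗ (asHomE u).hom)) = (homEFunctor Λ E).map e ((LinearMap.range e.hom).subtype ∘ₗ (asHomE u).hom) := by rw [he]; rfl
      rw [h4]
      show e (((asHomE u) x).1) = ((asHomE u) x).1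
      exact heid' _ ((asHomE u) x).2

end Aux2

section Aux3

universe u

variable {Λ : Type u} [Ring Λ] {E : ModuleCat.{u} Λ}

/-- The complex `Hom_Λ(E, K•)` over `Γ`. -/
abbrev mappedComplex (K : CochainComplex (ModuleCat.{u} Λ) ℤ) :
    CochainComplex (ModuleCat.{u} (Module.End Λ E)ᵐᵒᵖ) ℤ where
  X n := (homEFunctor Λ E).obj (K.X n)
  d i j := (homEFunctor Λ E).map (K.d i j)
  shape i j h := by
    show (homEFunctor Λ E).map (K.d i j) = 0
    rw [K.shape i j h, homE_map_zero]
  d_comp_d' i j l _ _ := by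
    show (homEFunctor Λ E).map (K.d i j) ≫ (homEFunctor Λ E).map (K.d j l) = 0
    rw [← Functor.map_comp, K.d_comp_d, homE_map_zero]

@[simp] theorem mappedComplex_X (K : CochainComplex (ModuleCat.{u} Λ) ℤ) (n : ℤ) :
    (mappedComplex (E := E) K).X n = (homEFunctor Λ E).obj (K.X n) := rfl

@[simp] theorem mappedComplex_d (K : CochainComplex (ModuleCat.{u} Λ) ℤ) (i j : ℤ) :
    (mappedComplex (E := E) K).d i j = (homEFunctor Λ E).map (K.d i j) := rfl

/-- `Hom(E, Im d) ≅ Im Hom(E,d)` when `Hom(E,K•)` is exact at the relevant spot. -/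
theorem homE_range_iso (K : CochainComplex (ModuleCat.{u} Λ) ℤ) (hc : CExact (InAdd Λ E) K)
    (a b : ℤ) (ha : a = b - 1) :
    Nonempty ((homEFunctor Λ E).obj
        (ModuleCat.of Λ (LinearMap.range (K.d a b).hom)) ≅
      ModuleCat.of (Module.End Λ E)ᵐᵒᵖ
        (LinearMap.range ((homEFunctor Λ E).map (K.d a b)).hom)) := by
  subst ha
  set d1 : K.X (b-1) ⟶ K.X b := K.d (b-1) b with hd1
  have hmem1 : ∀ u : ((homEFunctor Λ E).obj
      (ModuleCat.of Λ (LinearMap.range d1.hom)) : Type u),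
      ((LinearMap.range d1.hom).subtype ∘ₗ (asHomE u).hom) ∈
        LinearMap.range ((homEFunctor Λ E).map d1).hom := by
    intro u
    have hg : (ModuleCat.ofHom ((LinearMap.range d1.hom).subtype ∘ₗ (asHomE u).hom) : E ⟶ K.X b)
        ≫ K.d b (b+1) = 0 := by
      apply ModuleCat.hom_ext; apply LinearMap.ext
      intro x
      obtain ⟨y, hy⟩ := ((asHomE u) x).2
      show K.d b (b+1) (((asHomE u) x).1) = 0
      rw [← hy]
      exact ConcreteCategory.congr_hom (K.d_comp_d (b-1) b (b+1)) y
    obtain ⟨f, hf⟩ := hc E inAdd_self b _ hg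
    exact ⟨toHomE f, congrArg ModuleCat.Hom.hom hf⟩
  have hmem2 : ∀ p : LinearMap.range ((homEFunctor Λ E).map d1).hom,
      ∀ x : E, (asHomE p.1) x ∈ LinearMap.range d1.hom := by
    rintro ⟨q, f, hf⟩ x
    exact ⟨(asHomE f) x, ConcreteCategory.congr_hom (congrArg asHomE hf) x⟩
  letI := endOpModule Λ E (ModuleCat.of Λ (LinearMap.range d1.hom))
  exact ⟨LinearEquiv.toModuleIso
    { toFun := fun u => ⟨(LinearMap.range d1.hom).subtype ∘ₗ (asHomE u).hom,
        hmem1 u⟩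
      map_add' := fun u v => Subtype.ext (LinearMap.ext fun x => rfl)
      map_smul' := fun c u => Subtype.ext (LinearMap.ext fun x => rfl)
      invFun := fun p => LinearMap.codRestrict _ (asHomE p.1).hom (hmem2 p)
      left_inv := fun u => LinearMap.ext fun x => Subtype.ext rfl
      right_inv := fun p => Subtype.ext (LinearMap.ext fun x => rfl) }⟩

end Aux3

section Part1

universe u

variable {Λ : Type u} [Ring Λ] {E : ModuleCat.{u} Λ}

theorem part1_main (hgen : InAdd Λ E (ModuleCat.of Λ Λ)) (X : ModuleCat.{u} Λ)
    (hX : GClass (InAdd Λ E) X) :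
    GPfg (Module.End Λ E)ᵐᵒᵖ ((homEFunctor Λ E).obj X) := by
  obtain ⟨K, hK⟩ := hX
  have hmem : ∀ n : ℤ, Projective ((mappedComplex (E := E) K).X n) ∧
      Module.Finite (Module.End Λ E)ᵐᵒᵖ ((mappedComplex (E := E) K).X n) := by
    intro n
    obtain ⟨h1, h2⟩ := homE_obj_finite_projective (hK.mem n)
    exact ⟨myProjectiveCat h2, h1⟩
  have hYexact : ∀ n : ℤ, (mappedComplex (E := E) K).ExactAt n := by
    intro n
    rw [myExactAtIff]
    intro x hx
    have hx' : (asHomE x : E ⟶ K.X n) ≫ K.d n (n+1) = 0 := ModuleCat.hom_ext hx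
    obtain ⟨f, hf⟩ := hK.cexact E inAdd_self n (asHomE x) hx'
    exact ⟨toHomE f, congrArg ModuleCat.Hom.hom hf⟩
  have hYce : CExact (fun C : ModuleCat (Module.End Λ E)ᵐᵒᵖ =>
      Projective C ∧ Module.Finite (Module.End Λ E)ᵐᵒᵖ C) (mappedComplex (E := E) K) := by
    intro C hC n g hg
    haveI : Module.Projective (Module.End Λ E)ᵐᵒᵖ C := myModuleProj hC.1
    have hmemg : ∀ c : C, g c ∈ LinearMap.range
        ((mappedComplex (E := E) K).d (n-1) n).hom := by
      intro c
      have h0 : (asHomE (g c) : E ⟶ K.X n) ≫ K.d n (n+1) = 0 := ModuleCat.hom_ext (ConcreteCategory.congr_hom hg c)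
      obtain ⟨f, hf⟩ := hK.cexact E inAdd_self n (asHomE (g c)) h0
      exact ⟨toHomE f, congrArg ModuleCat.Hom.hom hf⟩
    obtain ⟨f, hf⟩ := Module.projective_lifting_property
      (((mappedComplex (E := E) K).d (n-1) n).hom.rangeRestrict)
      (LinearMap.codRestrict _ g.hom hmemg)
      (LinearMap.surjective_rangeRestrict _)
    refine ⟨ModuleCat.ofHom f, ?_⟩
    apply ModuleCat.hom_ext; apply LinearMap.ext; intro c
    exact congrArg Subtype.val (DFunLike.congr_fun hf c)
  have hYco : CCoexact (fun C : ModuleCat (Module.End Λ E)ᵐᵒᵖ =>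
      Projective C ∧ Module.Finite (Module.End Λ E)ᵐᵒᵖ C) (mappedComplex (E := E) K) := by
    intro C hC n g hg
    obtain ⟨Mc, hMc, ⟨θ⟩⟩ := exists_inAdd_iso hgen C hC.1 hC.2
    obtain ⟨h, hh⟩ := homE_full hgen
      ((g ≫ θ.hom : (mappedComplex (E := E) K).X n ⟶ (homEFunctor Λ E).obj Mc))
    have hcond : K.d (n-1) n ≫ h = 0 := by
      apply homE_faithful hgen
      rw [Functor.map_comp, hh, homE_map_zero]
      show (mappedComplex (E := E) K).d (n-1) n ≫ (g ≫ θ.hom) = 0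
      rw [← Category.assoc, hg, Limits.zero_comp]
    obtain ⟨h', hh'⟩ := hK.ccoexact Mc hMc n h hcond
    refine ⟨((homEFunctor Λ E).map h' ≫ θ.inv :
      (mappedComplex (E := E) K).X (n+1) ⟶ C), ?_⟩
    show (mappedComplex (E := E) K).d n (n+1) ≫ ((homEFunctor Λ E).map h' ≫ θ.inv) = g
    have h3 : (mappedComplex (E := E) K).d n (n+1) ≫ (homEFunctor Λ E).map h' =
        (homEFunctor Λ E).map h := by
      show (homEFunctor Λ E).map (K.d n (n+1)) ≫ _ = _
      rw [← Functor.map_comp, hh']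
    rw [← Category.assoc, h3, hh, Category.assoc, Iso.hom_inv_id, Category.comp_id]
  obtain ⟨e2⟩ := homE_range_iso (E := E) K hK.cexact 0 1 (by norm_num)
  have eiso : (homEFunctor Λ E).obj X ≅ ModuleCat.of (Module.End Λ E)ᵐᵒᵖ
      (LinearMap.range ((homEFunctor Λ E).map (K.d 0 1)).hom) :=
    (homEFunctor Λ E).mapIso hK.im.some ≪≫
      (homEFunctor Λ E).mapIso (ModuleCat.imageIsoRange (K.d 0 1)) ≪≫ e2
  constructor
  · -- finiteness
    haveI hfin0 : Module.Finite (Module.End Λ E)ᵐᵒᵖ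
        ((homEFunctor Λ E).obj (K.X 0) : Type u) := (homE_obj_finite_projective (hK.mem 0)).1
    haveI hfinr : Module.Finite (Module.End Λ E)ᵐᵒᵖ
        (LinearMap.range ((homEFunctor Λ E).map (K.d 0 1)).hom) :=
      Module.Finite.of_surjective _ (LinearMap.surjective_rangeRestrict
        ((homEFunctor Λ E).map (K.d 0 1)).hom)
    haveI hfinr' : Module.Finite (Module.End Λ E)ᵐᵒᵖ
        (ModuleCat.of (Module.End Λ E)ᵐᵒᵖ
          (LinearMap.range ((homEFunctor Λ E).map (K.d 0 1)).hom) : Type u) := hfinr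
    exact Module.Finite.equiv eiso.symm.toLinearEquiv
  · -- GClass
    refine ⟨mappedComplex (E := E) K, hYexact, hmem, hYce, hYco, ?_⟩
    exact ⟨eiso ≪≫ (ModuleCat.imageIsoRange ((mappedComplex (E := E) K).d 0 1)).symm⟩

end Part1

section Part2

universe u

variable {Λ : Type u} [Ring Λ] {E : ModuleCat.{u} Λ}

/-- Build a cochain complex from a ℤ-indexed family of composable maps. -/
abbrev builtComplex (M : ℤ → ModuleCat.{u} Λ) (δ : ∀ n : ℤ, M n ⟶ M (n+1))
    (hδδ : ∀ n : ℤ, δ n ≫ δ (n+1) = 0) : CochainComplex (ModuleCat.{u} Λ) ℤ where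
  X := M
  d i j := if h : j = i + 1 then δ i ≫ eqToHom (congrArg M h.symm) else 0
  shape i j h := dif_neg (fun hh => h hh.symm)
  d_comp_d' := by
    rintro i j l (rfl : i + 1 = j) (rfl : _ + 1 = l)
    show (if h : i + 1 = i + 1 then δ i ≫ eqToHom (congrArg M h.symm) else 0) ≫
      (if h : i + 1 + 1 = i + 1 + 1 then δ (i+1) ≫ eqToHom (congrArg M h.symm) else 0) = 0
    rw [dif_pos rfl, dif_pos rfl]
    simp only [eqToHom_refl, Category.comp_id]
    exact hδδ i

@[simp] theorem builtComplex_X (M : ℤ → ModuleCat.{u} Λ) (δ : ∀ n : ℤ, M n ⟶ M (n+1))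
    (hδδ : ∀ n : ℤ, δ n ≫ δ (n+1) = 0) (n : ℤ) : (builtComplex M δ hδδ).X n = M n := rfl

@[simp] theorem builtComplex_d (M : ℤ → ModuleCat.{u} Λ) (δ : ∀ n : ℤ, M n ⟶ M (n+1))
    (hδδ : ∀ n : ℤ, δ n ≫ δ (n+1) = 0) (i : ℤ) :
    (builtComplex M δ hδδ).d i (i+1) = δ i := by
  show (if h : i + 1 = i + 1 then δ i ≫ eqToHom (congrArg M h.symm) else 0) = δ i
  rw [dif_pos rfl]
  simp

theorem part2_main (hgen : InAdd Λ E (ModuleCat.of Λ Λ))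
    (Y : ModuleCat.{u} (Module.End Λ E)ᵐᵒᵖ) (hY : GPfg (Module.End Λ E)ᵐᵒᵖ Y) :
    ∃ X : ModuleCat.{u} Λ, GClass (InAdd Λ E) X ∧
      Nonempty ((homEFunctor Λ E).obj X ≅ Y) := by
  obtain ⟨hYfin, Q, hQ⟩ := hY
  have hMex : ∀ n : ℤ, ∃ M : ModuleCat.{u} Λ, InAdd Λ E M ∧
      Nonempty (Q.X n ≅ (homEFunctor Λ E).obj M) :=
    fun n => exists_inAdd_iso hgen (Q.X n) (hQ.mem n).1 (hQ.mem n).2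
  choose M hM ψn using hMex
  let ψ : ∀ n : ℤ, Q.X n ≅ (homEFunctor Λ E).obj (M n) := fun n => (ψn n).some
  have hδex : ∀ n : ℤ, ∃ h : M n ⟶ M (n+1),
      (homEFunctor Λ E).map h = (ψ n).inv ≫ Q.d n (n+1) ≫ (ψ (n+1)).hom :=
    fun n => homE_full hgen _
  choose δ hδ using hδex
  have hδδ : ∀ n : ℤ, δ n ≫ δ (n+1) = 0 := by
    intro n
    apply homE_faithful hgen
    rw [Functor.map_comp, hδ, hδ, homE_map_zero]
    simp
  set XC := builtComplex M δ hδδ with hXC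
  have hdF : ∀ i j (h : j = i + 1), (homEFunctor Λ E).map (XC.d i j) =
      (ψ i).inv ≫ Q.d i j ≫ (ψ j).hom := by
    intro i j h; subst h
    have hb : XC.d i (i+1) = δ i := builtComplex_d M δ hδδ i
    rw [hb]
    exact hδ i
  have hce : CExact (InAdd Λ E) XC := by
    intro C hC n g hg
    obtain ⟨hf1, hp1⟩ := homE_obj_finite_projective hC
    have hg1 : ((homEFunctor Λ E).map g ≫ (ψ n).inv :
        (homEFunctor Λ E).obj C ⟶ Q.X n) ≫ Q.d n (n+1) = 0 := by
      have hQd : Q.d n (n+1) =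
          (ψ n).hom ≫ (homEFunctor Λ E).map (XC.d n (n+1)) ≫ (ψ (n+1)).inv := by
        rw [hdF n (n+1) rfl]; simp
      rw [hQd, Category.assoc, Iso.inv_hom_id_assoc, ← Category.assoc,
        ← Functor.map_comp, hg, homE_map_zero, Limits.zero_comp]
    obtain ⟨φ, hφ⟩ := hQ.cexact ((homEFunctor Λ E).obj C) ⟨myProjectiveCat hp1, hf1⟩ n _ hg1
    obtain ⟨f, hf⟩ := homE_full hgen (φ ≫ (ψ (n-1)).hom)
    refine ⟨f, homE_faithful hgen ?_⟩
    rw [Functor.map_comp, hf, hdF (n-1) n (by omega)]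
    rw [Category.assoc, Iso.hom_inv_id_assoc, ← Category.assoc, hφ]
    rw [Category.assoc, Iso.inv_hom_id, Category.comp_id]
  have hco : CCoexact (InAdd Λ E) XC := by
    intro C hC n g hg
    obtain ⟨hf1, hp1⟩ := homE_obj_finite_projective hC
    have hg2 : Q.d (n-1) n ≫ ((ψ n).hom ≫ (homEFunctor Λ E).map g) = 0 := by
      have hQd : Q.d (n-1) n =
          (ψ (n-1)).hom ≫ (homEFunctor Λ E).map (XC.d (n-1) n) ≫ (ψ n).inv := by
        rw [hdF (n-1) n (by omega)]; simp
      rw [hQd]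
      simp only [Category.assoc, Iso.inv_hom_id_assoc]
      rw [← Functor.map_comp, hg, homE_map_zero, Limits.comp_zero]
    obtain ⟨φ, hφ⟩ := hQ.ccoexact ((homEFunctor Λ E).obj C) ⟨myProjectiveCat hp1, hf1⟩ n _ hg2
    obtain ⟨f, hf⟩ := homE_full hgen ((ψ (n+1)).inv ≫ φ)
    refine ⟨f, homE_faithful hgen ?_⟩
    rw [Functor.map_comp, hf, hdF n (n+1) rfl]
    simp only [Category.assoc, Iso.hom_inv_id_assoc]
    rw [hφ, Iso.inv_hom_id_assoc]
  have hex : ∀ n : ℤ, XC.ExactAt n := by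
    intro n
    rw [myExactAtIff]
    intro x hx
    have hg : (show ModuleCat.of Λ Λ ⟶ XC.X n from ModuleCat.ofHom (LinearMap.toSpanSingleton Λ (XC.X n) x)) ≫
        XC.d n (n+1) = 0 := by
      apply ModuleCat.hom_ext; apply LinearMap.ext; intro c
      show XC.d n (n+1) ((LinearMap.toSpanSingleton Λ (XC.X n) x) c) = 0
      rw [LinearMap.toSpanSingleton_apply, map_smul, hx, smul_zero]
    obtain ⟨f, hf⟩ := hce (ModuleCat.of Λ Λ) hgen n _ hg
    refine ⟨f (1 : Λ), ?_⟩
    have h5 := ConcreteCategory.congr_hom hf (1 : Λ)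
    have h6 : (LinearMap.toSpanSingleton Λ (XC.X n) x) (1 : Λ) = x :=
      LinearMap.toSpanSingleton_apply_one Λ (XC.X n) x
    exact h5.trans h6
  -- assemble
  refine ⟨ModuleCat.of Λ (LinearMap.range (XC.d 0 1).hom),
    ⟨XC, hex, hM, hce, hco, ⟨(ModuleCat.imageIsoRange (XC.d 0 1)).symm⟩⟩, ?_⟩
  obtain ⟨e2⟩ := homE_range_iso (E := E) XC hce 0 1 (by norm_num)
  have hψ0top : LinearMap.range (ψ 0).inv.hom = ⊤ := by
    rw [LinearMap.range_eq_top]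
    exact fun q => ⟨(ψ 0).hom q, ConcreteCategory.congr_hom (ψ 0).hom_inv_id q⟩
  have hd01 : ((homEFunctor Λ E).map (XC.d 0 1)).hom =
      ((ψ 1).hom.hom ∘ₗ
        (Q.d 0 1).hom) ∘ₗ
        (ψ 0).inv.hom := by
    rw [hdF 0 1 rfl]
    rfl
  have hrange : LinearMap.range ((homEFunctor Λ E).map (XC.d 0 1)).hom =
      Submodule.map (ψ 1).hom.hom
        (LinearMap.range (Q.d 0 1).hom) := by
    rw [hd01, LinearMap.range_comp_of_range_eq_top _ hψ0top, LinearMap.range_comp]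
  have iso3 : ModuleCat.of (Module.End Λ E)ᵐᵒᵖ
      (LinearMap.range ((homEFunctor Λ E).map (XC.d 0 1)).hom) ≅
      ModuleCat.of (Module.End Λ E)ᵐᵒᵖ
        (Submodule.map (ψ 1).hom.hom
          (LinearMap.range (Q.d 0 1).hom)) :=
    (LinearEquiv.ofEq _ _ hrange).toModuleIso
  have iso4 : ModuleCat.of (Module.End Λ E)ᵐᵒᵖ
      (Submodule.map (ψ 1).hom.hom
        (LinearMap.range (Q.d 0 1).hom)) ≅
      ModuleCat.of (Module.End Λ E)ᵐᵒᵖ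
        (LinearMap.range (Q.d 0 1).hom) :=
    (((ψ 1).toLinearEquiv.submoduleMap
      (LinearMap.range (Q.d 0 1).hom)).symm).toModuleIso
  exact ⟨e2 ≪≫ iso3 ≪≫ iso4 ≪≫ (ModuleCat.imageIsoRange (Q.d 0 1)).symm ≪≫ hQ.im.some.symm⟩

end Part2
theorem homE_equivalence_GE_GPGamma
    (R : Type*) [CommRing R] [IsArtinianRing R]
    [Algebra R Λ] [Module.Finite R Λ]
    (hgen : InAdd Λ E (ModuleCat.of Λ Λ))
    (hEfin : Module.Finite Λ E) :
    (∀ X : ModuleCat Λ, GClass (InAdd Λ E) X →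
        GPfg (Module.End Λ E)ᵐᵒᵖ ((homEFunctor Λ E).obj X)) ∧
    (∀ Y : ModuleCat (Module.End Λ E)ᵐᵒᵖ, GPfg (Module.End Λ E)ᵐᵒᵖ Y →
        ∃ X : ModuleCat Λ, GClass (InAdd Λ E) X ∧
          Nonempty ((homEFunctor Λ E).obj X ≅ Y)) ∧
    (∀ X X' : ModuleCat Λ, GClass (InAdd Λ E) X → GClass (InAdd Λ E) X' →
        Function.Bijective (fun g : X ⟶ X' => (homEFunctor Λ E).map g)) := by
  refine ⟨?_, ?_, ?_⟩
  · intro X hX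
    exact part1_main hgen X hX
  · intro Y hY
    exact part2_main hgen Y hY
  · intro X X' _ _
    exact homE_bijective hgen X X'
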